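/- Define φ_k(x) = (1−x²)(1−x) R_k^{(2,1)}(x) for k ≥ 0, where R_k^{(2,1)} is the normalized Jacobi polynomial. Then the third derivative satisfies D³φ_k(x) = 2(k+1)(k+3) R_k^{(1,2)}(x). -/

import Mathlib

/-- Classical Jacobi polynomial `P_n^{(a,b)}(x)` (real parameters), via the
hypergeometric sum representation. -/
noncomputable def jacobiP (n : ℕ) (a b x : ℝ) : ℝ :=
  (Real.Gamma (a + n + 1) / (n.factorial * Real.Gamma (a + b + n + 1))) *
    ∑ m ∈ Finset.range (n + 1),
      (n.choose m : ℝ) * (Real.Gamma (a + b + n + m + 1) / Real.Gamma (a + m + 1)) *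
        ((x - 1) / 2) ^ m

/-- Normalized Jacobi polynomial `R_n^{(a,b)}(x) = P_n^{(a,b)}(x)/P_n^{(a,b)}(1)`. -/
noncomputable def jacobiR (n : ℕ) (a b x : ℝ) : ℝ := jacobiP n a b x / jacobiP n a b 1

section Aux
open Finset

lemma gam_nat' (n : ℕ) : Real.Gamma ((n:ℝ) + 1) = n.factorial := Real.Gamma_nat_eq_factorial n

lemma jacobiPgen (a b : ℕ) (k : ℕ) (y : ℝ) : jacobiP k a b y =
    (((k+a).factorial : ℝ)/(k.factorial * (k+a+b).factorial)) *
    ∑ m ∈ Finset.range (k+1),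
      (k.choose m : ℝ) * (((k+m+a+b).factorial : ℝ) / ((m+a).factorial : ℝ)) * ((y-1)/2)^m := by
  unfold jacobiP
  have h1 : (a : ℝ) + k + 1 = ((k+a : ℕ) : ℝ) + 1 := by push_cast; ring
  have h2 : (a : ℝ) + b + k + 1 = ((k+a+b : ℕ) : ℝ) + 1 := by push_cast; ring
  rw [h1, h2, gam_nat', gam_nat']
  congr 1
  refine Finset.sum_congr rfl fun m _ => ?_
  rw [show (a:ℝ) + b + k + m + 1 = ((k+m+a+b : ℕ) : ℝ) + 1 by push_cast; ring,
      show (a:ℝ) + m + 1 = ((m+a : ℕ) : ℝ) + 1 by push_cast; ring, gam_nat', gam_nat']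

lemma jacobiPgen_one (a b : ℕ) (k : ℕ) : jacobiP k a b 1 =
    (((k+a).factorial : ℝ)/(k.factorial * a.factorial)) := by
  rw [jacobiPgen]
  rw [Finset.sum_eq_single 0 (by
      intro m _ hm
      simp [zero_pow hm]) (by simp)]
  have hb : ((k+a+b).factorial : ℝ) ≠ 0 := by positivity
  have hk : (k.factorial : ℝ) ≠ 0 := by positivity
  have ha : (a.factorial : ℝ) ≠ 0 := by positivity
  simp only [Nat.choose_zero_right, Nat.cast_one, zero_add, Nat.add_zero, one_mul]
  rw [show ((1:ℝ)-1)/2 = 0 by norm_num]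
  field_simp

lemma jacobiRgen (a b : ℕ) (k : ℕ) (y : ℝ) : jacobiR k a b y =
    ∑ m ∈ Finset.range (k+1),
      (k.choose m : ℝ) * ((a.factorial : ℝ) * ((k+m+a+b).factorial : ℝ) /
        ((m+a).factorial * (k+a+b).factorial)) * ((y-1)/2)^m := by
  unfold jacobiR
  rw [jacobiPgen, jacobiPgen_one]
  have hka : (((k+a).factorial : ℝ)) ≠ 0 := by positivity
  have hk : (k.factorial : ℝ) ≠ 0 := by positivity
  have ha : (a.factorial : ℝ) ≠ 0 := by positivity
  have hab : (((k+a+b).factorial : ℝ)) ≠ 0 := by positivity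
  rw [div_eq_iff (by positivity), Finset.mul_sum, Finset.sum_mul]
  refine Finset.sum_congr rfl fun m _ => ?_
  have hma : ((m+a).factorial : ℝ) ≠ 0 := by positivity
  field_simp

lemma jacobiR21 (k : ℕ) (y : ℝ) : jacobiR k 2 1 y =
    ∑ m ∈ Finset.range (k+1),
      ((k.choose m : ℝ) * (2 * ((k+m+3).factorial : ℝ) /
        ((m+2).factorial * (k+3).factorial))) * ((y-1)/2)^m := by
  rw [show (2:ℝ) = ((2:ℕ):ℝ) by norm_num, show (1:ℝ) = ((1:ℕ):ℝ) by norm_num, jacobiRgen]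
  refine Finset.sum_congr rfl fun m _ => ?_
  rw [show k+m+2+1 = k+m+3 by omega, show k+2+1 = k+3 by omega]
  norm_num [Nat.factorial]

lemma jacobiR12 (k : ℕ) (y : ℝ) : jacobiR k 1 2 y =
    ∑ m ∈ Finset.range (k+1),
      ((k.choose m : ℝ) * (((k+m+3).factorial : ℝ) /
        ((m+1).factorial * (k+3).factorial))) * ((y-1)/2)^m := by
  rw [show (1:ℝ) = ((1:ℕ):ℝ) by norm_num, show (2:ℝ) = ((2:ℕ):ℝ) by norm_num, jacobiRgen]
  refine Finset.sum_congr rfl fun m _ => ?_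
  rw [show k+m+1+2 = k+m+3 by omega, show k+1+2 = k+3 by omega]
  norm_num [Nat.factorial]

lemma hasD (j : ℕ) (x : ℝ) :
    HasDerivAt (fun y : ℝ => ((y-1)/2)^j) ((j:ℝ)/2 * ((x-1)/2)^(j-1)) x := by
  have h : HasDerivAt (fun y : ℝ => (y-1)/2) (1/2) x := by
    simpa using ((hasDerivAt_id x).sub_const 1).div_const 2
  have : HasDerivAt (fun y : ℝ => ((y-1)/2)^j) ((j:ℝ) * ((x-1)/2)^(j-1) * (1/2)) x := h.fun_pow j
  convert this using 1
  ring

lemma d_two_sums (n1 n2 : ℕ) (a b : ℕ → ℝ) (e f : ℕ → ℕ) :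
    deriv (fun y : ℝ => (∑ m ∈ range n1, a m * ((y-1)/2)^(e m)) +
        ∑ m ∈ range n2, b m * ((y-1)/2)^(f m)) =
    fun x => (∑ m ∈ range n1, (a m * ((e m : ℝ)/2)) * ((x-1)/2)^(e m - 1)) +
        ∑ m ∈ range n2, (b m * ((f m : ℝ)/2)) * ((x-1)/2)^(f m - 1) := by
  funext x
  have h1 : HasDerivAt (fun y : ℝ => ∑ m ∈ range n1, a m * ((y-1)/2)^(e m))
      (∑ m ∈ range n1, a m * ((e m : ℝ)/2 * ((x-1)/2)^(e m - 1))) x :=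
    HasDerivAt.fun_sum fun m _ => (hasD (e m) x).const_mul (a m)
  have h2 : HasDerivAt (fun y : ℝ => ∑ m ∈ range n2, b m * ((y-1)/2)^(f m))
      (∑ m ∈ range n2, b m * ((f m : ℝ)/2 * ((x-1)/2)^(f m - 1))) x :=
    HasDerivAt.fun_sum fun m _ => (hasD (f m) x).const_mul (b m)
  rw [(h1.fun_add h2).deriv]
  congr 1 <;> exact Finset.sum_congr rfl fun m _ => by ring

end Aux

theorem thirdDeriv_basis (k : ℕ) (x : ℝ) :
    iteratedDeriv 3 (fun y => (1 - y ^ 2) * (1 - y) * jacobiR k 2 1 y) x =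
      2 * ((k : ℝ) + 1) * ((k : ℝ) + 3) * jacobiR k 1 2 x := by
  set c : ℕ → ℝ := fun m => (k.choose m : ℝ) * (2 * ((k+m+3).factorial : ℝ) /
      ((m+2).factorial * (k+3).factorial)) with hc_def
  -- Step 1: rewrite the function as two power sums
  have step1 : (fun y => (1 - y ^ 2) * (1 - y) * jacobiR k 2 1 y) =
      (fun y : ℝ => (∑ m ∈ Finset.range (k+1), (8 * c m) * ((y-1)/2)^(m+2)) +
        ∑ m ∈ Finset.range (k+1), (8 * c m) * ((y-1)/2)^(m+3)) := by
    funext y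
    rw [jacobiR21, Finset.mul_sum, ← Finset.sum_add_distrib]
    refine Finset.sum_congr rfl fun m _ => ?_
    ring
  rw [step1]
  -- Step 2: three derivatives
  have e3 : iteratedDeriv 3 (fun y : ℝ =>
        (∑ m ∈ Finset.range (k+1), (8 * c m) * ((y-1)/2)^(m+2)) +
        ∑ m ∈ Finset.range (k+1), (8 * c m) * ((y-1)/2)^(m+3)) =
      fun x : ℝ => (∑ m ∈ Finset.range (k+1),
          (c m * (((m:ℝ)+2) * ((m:ℝ)+1) * (m:ℝ))) * ((x-1)/2)^(m-1)) +
        ∑ m ∈ Finset.range (k+1),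
          (c m * (((m:ℝ)+3) * ((m:ℝ)+2) * ((m:ℝ)+1))) * ((x-1)/2)^m := by
    rw [show (3:ℕ) = 0+1+1+1 from rfl, iteratedDeriv_succ, iteratedDeriv_succ,
      iteratedDeriv_succ, iteratedDeriv_zero]
    rw [d_two_sums (k+1) (k+1) _ _ (fun m => m+2) (fun m => m+3)]
    have r1 : (fun x : ℝ => (∑ m ∈ Finset.range (k+1),
          ((8 * c m) * (((m+2:ℕ):ℝ)/2)) * ((x-1)/2)^(m+2-1)) +
        ∑ m ∈ Finset.range (k+1),
          ((8 * c m) * (((m+3:ℕ):ℝ)/2)) * ((x-1)/2)^(m+3-1)) =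
        (fun x : ℝ => (∑ m ∈ Finset.range (k+1),
          (4 * c m * ((m:ℝ)+2)) * ((x-1)/2)^(m+1)) +
        ∑ m ∈ Finset.range (k+1),
          (4 * c m * ((m:ℝ)+3)) * ((x-1)/2)^(m+2)) := by
      funext z
      congr 1
      · refine Finset.sum_congr rfl fun m _ => ?_
        rw [show m+2-1 = m+1 by omega]; push_cast; ring
      · refine Finset.sum_congr rfl fun m _ => ?_
        rw [show m+3-1 = m+2 by omega]; push_cast; ring
    rw [r1, d_two_sums (k+1) (k+1) _ _ (fun m => m+1) (fun m => m+2)]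
    have r2 : (fun x : ℝ => (∑ m ∈ Finset.range (k+1),
          ((4 * c m * ((m:ℝ)+2)) * (((m+1:ℕ):ℝ)/2)) * ((x-1)/2)^(m+1-1)) +
        ∑ m ∈ Finset.range (k+1),
          ((4 * c m * ((m:ℝ)+3)) * (((m+2:ℕ):ℝ)/2)) * ((x-1)/2)^(m+2-1)) =
        (fun x : ℝ => (∑ m ∈ Finset.range (k+1),
          (2 * c m * ((m:ℝ)+2) * ((m:ℝ)+1)) * ((x-1)/2)^m) +
        ∑ m ∈ Finset.range (k+1),
          (2 * c m * ((m:ℝ)+3) * ((m:ℝ)+2)) * ((x-1)/2)^(m+1)) := by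
      funext z
      congr 1
      · refine Finset.sum_congr rfl fun m _ => ?_
        rw [show m+1-1 = m by omega]; push_cast; ring
      · refine Finset.sum_congr rfl fun m _ => ?_
        rw [show m+2-1 = m+1 by omega]; push_cast; ring
    rw [r2, d_two_sums (k+1) (k+1) _ _ (fun m => m) (fun m => m+1)]
    funext z
    congr 1
    · refine Finset.sum_congr rfl fun m _ => ?_
      push_cast; ring
    · refine Finset.sum_congr rfl fun m _ => ?_
      rw [show m+1-1 = m by omega]; push_cast; ring
  rw [e3]
  beta_reduce
  -- Step 3: reindex the first sum and compare coefficients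
  rw [Finset.sum_range_succ' (fun m => (c m * (((m:ℝ)+2) * ((m:ℝ)+1) * (m:ℝ))) * ((x-1)/2)^(m-1)) k]
  simp only [Nat.cast_zero, Nat.cast_add, Nat.cast_one]
  rw [show (c 0 * (((0:ℝ)+2) * ((0:ℝ)+1) * (0:ℝ))) * ((x-1)/2)^(0-1) = 0 by ring]
  rw [add_zero]
  have ext1 : ∑ m ∈ Finset.range k,
      (c (m+1) * ((((m:ℝ)+1)+2) * (((m:ℝ)+1)+1) * ((m:ℝ)+1))) * ((x-1)/2)^(m+1-1) =
      ∑ m ∈ Finset.range (k+1),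
      (c (m+1) * (((m:ℝ)+3) * (((m:ℝ)+2)) * ((m:ℝ)+1))) * ((x-1)/2)^m := by
    rw [Finset.sum_range_succ]
    have hz : c (k+1) = 0 := by
      simp [hc_def, Nat.choose_succ_self]
    rw [hz]
    rw [mul_comm]
    simp only [zero_mul, mul_zero, add_zero]
    refine Finset.sum_congr rfl fun m _ => ?_
    rw [show m+1-1 = m by omega]; ring
  rw [ext1, jacobiR12, Finset.mul_sum, ← Finset.sum_add_distrib]
  refine Finset.sum_congr rfl fun m hm => ?_
  have hm' : m ≤ k := by simpa [Nat.lt_succ_iff] using hm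
  -- coefficient identity
  have key : c (m+1) * (((m:ℝ)+3) * (((m:ℝ)+2)) * ((m:ℝ)+1)) +
      c m * (((m:ℝ)+3) * ((m:ℝ)+2) * ((m:ℝ)+1)) =
      2 * ((k:ℝ)+1) * ((k:ℝ)+3) *
        ((k.choose m : ℝ) * (((k+m+3).factorial : ℝ) /
          ((m+1).factorial * (k+3).factorial))) := by
    simp only [hc_def]
    have hch : ((k.choose (m+1) : ℕ) : ℝ) * ((m:ℝ)+1) = (k.choose m : ℝ) * ((k:ℝ) - (m:ℝ)) := by
      have h := Nat.choose_succ_right_eq k m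
      have : ((k.choose (m+1) * (m+1) : ℕ) : ℝ) = ((k.choose m * (k - m) : ℕ) : ℝ) := by
        exact_mod_cast congrArg (Nat.cast (R := ℝ)) h
      push_cast [Nat.cast_sub hm'] at this
      linarith [this]
    have hf1 : ((k+(m+1)+3).factorial : ℝ) = ((k:ℝ)+(m:ℝ)+4) * ((k+m+3).factorial : ℝ) := by
      rw [show k+(m+1)+3 = (k+m+3)+1 by omega, Nat.factorial_succ]
      push_cast; ring
    have hf2 : (((m+1)+2).factorial : ℝ) = ((m:ℝ)+3) * ((m:ℝ)+2) * ((m+1).factorial : ℝ) := by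
      rw [show (m+1)+2 = ((m+1)+1)+1 by omega, Nat.factorial_succ, Nat.factorial_succ]
      push_cast; ring
    have hf3 : ((m+2).factorial : ℝ) = ((m:ℝ)+2) * ((m+1).factorial : ℝ) := by
      rw [show m+2 = (m+1)+1 by omega, Nat.factorial_succ]
      push_cast; ring
    have h1 : ((m+1).factorial : ℝ) ≠ 0 := by positivity
    have h2 : ((k+3).factorial : ℝ) ≠ 0 := by positivity
    have h3 : ((k+m+3).factorial : ℝ) ≠ 0 := by positivity
    have hm2 : ((m:ℝ)+2) ≠ 0 := by positivity
    have hm3 : ((m:ℝ)+3) ≠ 0 := by positivity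
    have hm1 : ((m:ℝ)+1) ≠ 0 := by positivity
    have hB : (k.choose (m+1) : ℝ) = (k.choose m : ℝ) * ((k:ℝ)-(m:ℝ)) / ((m:ℝ)+1) := by
      rw [eq_div_iff hm1]; exact hch
    rw [hB, hf1, hf2, hf3]
    field_simp
    ring
  calc (c (m+1) * (((m:ℝ)+3) * (((m:ℝ)+2)) * ((m:ℝ)+1))) * ((x-1)/2)^m +
      (c m * (((m:ℝ)+3) * ((m:ℝ)+2) * ((m:ℝ)+1))) * ((x-1)/2)^m
      = (c (m+1) * (((m:ℝ)+3) * (((m:ℝ)+2)) * ((m:ℝ)+1)) +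
        c m * (((m:ℝ)+3) * ((m:ℝ)+2) * ((m:ℝ)+1))) * ((x-1)/2)^m := by ring
    _ = _ := by rw [key]; ring
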